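/- For every 0 < a ≤ 1, the function q(δ) = ℓ(δ)/δ (with q(0) = 1 by continuous extension) satisfies: (i) q is even, i.e. q(δ) = q(−δ) for all δ; (ii) q is monotonically decreasing on [0, ∞); (iii) q(δ) ≤ q(0) = 1 for all δ ∈ ℝ. -/

import Mathlib

/-- `ℓ(δ) = F_a'(1+δ)`. -/
noncomputable def ell (a δ : ℝ) : ℝ :=
  (2 : ℝ) ^ (2 - a) * (Real.exp δ - 1) * Real.log 2 ^ (1 - a) *
    (Real.log (Real.exp (-δ) + 1) + Real.log (Real.exp δ + 1)) ^ (a - 1) /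
    (Real.exp δ + 1)

/-- `q(δ) = ℓ(δ)/δ` for `δ ≠ 0`, continuously extended by `q(0) = 1`. -/
noncomputable def qf (a δ : ℝ) : ℝ := if δ = 0 then 1 else ell a δ / δ

open Real Set

namespace Stmt12Aux

lemma Lid (δ : ℝ) : Real.log (Real.exp (-δ) + 1) + Real.log (Real.exp δ + 1)
    = 2 * Real.log (2 * Real.cosh (δ/2)) := by
  have h1 : (0:ℝ) < Real.exp (-δ) + 1 := by positivity
  have h2 : (0:ℝ) < Real.exp δ + 1 := by positivity
  rw [← Real.log_mul h1.ne' h2.ne']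
  have key : (Real.exp (-δ) + 1) * (Real.exp δ + 1) = (2 * Real.cosh (δ/2))^2 := by
    rw [Real.cosh_eq]
    have e1 : Real.exp δ = Real.exp (δ/2) * Real.exp (δ/2) := by
      rw [← Real.exp_add]; ring_nf
    have e2 : Real.exp (-δ) = (Real.exp (δ/2) * Real.exp (δ/2))⁻¹ := by
      rw [← Real.exp_add, ← Real.exp_neg]; ring_nf
    have e3 : Real.exp (-(δ/2)) = (Real.exp (δ/2))⁻¹ := Real.exp_neg _
    have hx : Real.exp (δ/2) ≠ 0 := (Real.exp_pos _).ne'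
    rw [e1, e2, e3]
    field_simp
    ring
  rw [key, Real.log_pow]
  push_cast
  ring

lemma Tid (δ : ℝ) : (Real.exp δ - 1) / (Real.exp δ + 1)
    = Real.sinh (δ/2) / Real.cosh (δ/2) := by
  rw [Real.sinh_eq, Real.cosh_eq]
  have e1 : Real.exp δ = Real.exp (δ/2) * Real.exp (δ/2) := by
    rw [← Real.exp_add]; ring_nf
  have e3 : Real.exp (-(δ/2)) = (Real.exp (δ/2))⁻¹ := Real.exp_neg _
  have hx : (0:ℝ) < Real.exp (δ/2) := Real.exp_pos _
  have h2 : (0:ℝ) < Real.exp δ + 1 := by positivity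
  have h4 : (0:ℝ) < Real.exp (δ/2) + (Real.exp (δ/2))⁻¹ := by positivity
  rw [e1, e3]
  rw [div_eq_div_iff (by positivity) (by positivity)]
  field_simp

lemma logs_pos (δ : ℝ) : 0 < Real.log (2 * Real.cosh (δ/2)) := by
  apply Real.log_pos
  nlinarith [Real.one_le_cosh (δ/2)]

lemma ell_eq (a δ : ℝ) : ell a δ =
    2 * Real.log 2 ^ (1 - a) * Real.log (2 * Real.cosh (δ/2)) ^ (a - 1) *
      (Real.sinh (δ/2) / Real.cosh (δ/2)) := by
  unfold ell
  rw [Lid]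
  have h1 : ((2:ℝ) * Real.log (2 * Real.cosh (δ/2))) ^ (a-1)
      = (2:ℝ) ^ (a-1) * Real.log (2 * Real.cosh (δ/2)) ^ (a-1) :=
    Real.mul_rpow (by norm_num) (logs_pos δ).le
  have h2 : (2:ℝ) ^ (2-a) * (2:ℝ) ^ (a-1) = 2 := by
    rw [← Real.rpow_add (by norm_num)]
    norm_num
  have h3 : (Real.exp δ - 1) / (Real.exp δ + 1) = Real.sinh (δ/2) / Real.cosh (δ/2) := Tid δ
  rw [h1, ← h3]
  have hne : Real.exp δ + 1 ≠ 0 := by positivity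
  field_simp
  linear_combination (Real.exp δ - 1) *
    Real.log (2 * Real.cosh (δ/2)) ^ (a-1) * h2

lemma ell_odd (a δ : ℝ) : ell a (-δ) = - ell a δ := by
  rw [ell_eq, ell_eq, show (-δ)/2 = -(δ/2) by ring, Real.sinh_neg, Real.cosh_neg]
  ring

lemma sinh_le_mul_cosh {t : ℝ} (ht : 0 ≤ t) : Real.sinh t ≤ t * Real.cosh t := by
  have mono : MonotoneOn (fun s => s * Real.cosh s - Real.sinh s) (Ici 0) := by
    apply monotoneOn_of_deriv_nonneg (convex_Ici 0)
    · fun_prop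
    · intro x _
      exact (((hasDerivAt_id x).mul (Real.hasDerivAt_cosh x)).sub
        (Real.hasDerivAt_sinh x)).differentiableAt.differentiableWithinAt
    · intro x hx
      rw [interior_Ici] at hx
      have hd : deriv (fun s => s * Real.cosh s - Real.sinh s) x = x * Real.sinh x := by
        have := (((hasDerivAt_id x).mul (Real.hasDerivAt_cosh x)).sub
          (Real.hasDerivAt_sinh x)).deriv
        simp only [id] at this
        rw [show (fun s => s * Real.cosh s - Real.sinh s) = id * Real.cosh - Real.sinh from rfl, this]; ring
      rw [hd]
      have h0 : 0 ≤ Real.sinh x := by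
        rw [← Real.sinh_zero]
        exact (Real.sinh_lt_sinh.2 hx).le
      have h1 : (0:ℝ) ≤ x := hx.le
      positivity
  have := mono (self_mem_Ici) (mem_Ici.2 ht) ht
  simpa using this

noncomputable def wfun (t : ℝ) : ℝ := Real.sinh t / (Real.cosh t * t)

lemma wfun_anti : AntitoneOn wfun (Ioi 0) := by
  apply antitoneOn_of_deriv_nonpos (convex_Ioi 0)
  · intro x hx
    apply ContinuousAt.continuousWithinAt
    have hne : Real.cosh x * x ≠ 0 := by
      have h1 := Real.cosh_pos (x := x); have h2 : (0:ℝ) < x := hx; positivity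
    exact (Real.continuous_sinh.continuousAt).div
      ((Real.continuous_cosh.continuousAt).mul continuousAt_id) hne
  · rw [interior_Ioi]
    intro x hx
    have hx' : (0:ℝ) < x := hx
    have hne : Real.cosh x * x ≠ 0 := by positivity
    exact ((Real.hasDerivAt_sinh x).div
      ((Real.hasDerivAt_cosh x).mul (hasDerivAt_id x)) hne).differentiableAt.differentiableWithinAt
  · rw [interior_Ioi]
    intro x hx
    have hx' : (0:ℝ) < x := hx
    have hne : Real.cosh x * x ≠ 0 := by positivity
    have hd := ((Real.hasDerivAt_sinh x).div
      ((Real.hasDerivAt_cosh x).mul (hasDerivAt_id x)) hne).deriv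
    simp only [id] at hd
    rw [show wfun = Real.sinh / (Real.cosh * id) from rfl, hd]
    simp only [Pi.mul_apply, id]
    apply div_nonpos_of_nonpos_of_nonneg _ (by positivity)
    have h1 : x ≤ Real.sinh x := (Real.self_lt_sinh_iff.2 hx').le
    have h2 : 0 ≤ Real.sinh x := by
      rw [← Real.sinh_zero]; exact (Real.sinh_lt_sinh.2 hx').le
    have h3 : 1 ≤ Real.cosh x := Real.one_le_cosh x
    have hsq : Real.cosh x ^ 2 - Real.sinh x ^ 2 = 1 := Real.cosh_sq_sub_sinh_sq x
    nlinarith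

lemma wfun_nonneg {t : ℝ} (ht : 0 < t) : 0 ≤ wfun t := by
  unfold wfun
  have h2 : 0 ≤ Real.sinh t := by
    rw [← Real.sinh_zero]; exact (Real.sinh_lt_sinh.2 ht).le
  have h3 := Real.cosh_pos (x := t)
  positivity

lemma wfun_le_one {t : ℝ} (ht : 0 < t) : wfun t ≤ 1 := by
  unfold wfun
  rw [div_le_one (by have := Real.cosh_pos (x := t); positivity)]
  have := sinh_le_mul_cosh ht.le
  linarith

/-- the `U` factor -/
noncomputable def Uf (a δ : ℝ) : ℝ :=
  Real.log 2 ^ (1-a) * Real.log (2 * Real.cosh (δ/2)) ^ (a-1)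

lemma qf_eq (a : ℝ) {δ : ℝ} (hδ : δ ≠ 0) : qf a δ = Uf a δ * wfun (δ/2) := by
  rw [qf, if_neg hδ, ell_eq]
  unfold Uf wfun
  have hc := Real.cosh_pos (x := δ/2)
  field_simp

lemma Uf_nonneg (a δ : ℝ) : 0 ≤ Uf a δ :=
  mul_nonneg (Real.rpow_nonneg (Real.log_nonneg (by norm_num)) _)
    (Real.rpow_nonneg (logs_pos δ).le _)

lemma logs_mono {x y : ℝ} (hx : 0 ≤ x) (hxy : x ≤ y) :
    Real.log (2 * Real.cosh (x/2)) ≤ Real.log (2 * Real.cosh (y/2)) := by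
  apply Real.log_le_log (by have := Real.cosh_pos (x := x/2); positivity)
  have : Real.cosh (x/2) ≤ Real.cosh (y/2) := by
    rw [Real.cosh_le_cosh, abs_of_nonneg (by linarith), abs_of_nonneg (by linarith)]
    linarith
  linarith

lemma Uf_anti {a : ℝ} (ha1 : a ≤ 1) {x y : ℝ} (hx : 0 ≤ x) (hxy : x ≤ y) :
    Uf a y ≤ Uf a x := by
  unfold Uf
  apply mul_le_mul_of_nonneg_left _ (Real.rpow_nonneg (Real.log_nonneg (by norm_num)) _)
  exact Real.rpow_le_rpow_of_nonpos (logs_pos x) (logs_mono hx hxy) (by linarith)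

lemma Uf_le_one {a : ℝ} (ha1 : a ≤ 1) {δ : ℝ} (hδ : 0 ≤ δ) : Uf a δ ≤ 1 := by
  have h0 := Uf_anti ha1 (le_refl 0) hδ
  have : Uf a 0 = 1 := by
    unfold Uf
    rw [show (0:ℝ)/2 = 0 by norm_num, Real.cosh_zero, mul_one,
      ← Real.rpow_add (Real.log_pos (by norm_num))]
    norm_num
  linarith

end Stmt12Aux

open Stmt12Aux
theorem stmt_12 (a : ℝ) (ha0 : 0 < a) (ha1 : a ≤ 1) :
    (∀ δ : ℝ, qf a δ = qf a (-δ)) ∧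
    AntitoneOn (qf a) (Set.Ici 0) ∧
    qf a 0 = 1 ∧ (∀ δ : ℝ, qf a δ ≤ 1) := by
  have heven : ∀ δ : ℝ, qf a δ = qf a (-δ) := by
    intro δ
    by_cases h : δ = 0
    · simp [qf, h]
    · rw [qf, qf, if_neg h, if_neg (neg_ne_zero.2 h), ell_odd, neg_div_neg_eq]
  have hq0 : qf a 0 = 1 := by simp [qf]
  have hanti : AntitoneOn (qf a) (Set.Ici 0) := by
    intro x hx y hy hxy
    simp only [Set.mem_Ici] at hx hy
    by_cases hy0 : y = 0
    · have hx0 : x = 0 := le_antisymm (hy0 ▸ hxy) hx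
      rw [hx0, hy0]
    · have hy' : 0 < y := lt_of_le_of_ne hy (Ne.symm hy0)
      rw [qf_eq a hy0]
      by_cases hx0 : x = 0
      · rw [hx0, hq0]
        exact mul_le_one₀ (Uf_le_one ha1 hy) (wfun_nonneg (by linarith)) (wfun_le_one (by linarith))
      · have hx' : 0 < x := lt_of_le_of_ne hx (Ne.symm hx0)
        rw [qf_eq a hx0]
        apply mul_le_mul (Uf_anti ha1 hx hxy)
          (wfun_anti (by simpa using by linarith : x/2 ∈ Set.Ioi (0:ℝ))
            (by simpa using by linarith : y/2 ∈ Set.Ioi (0:ℝ)) (by linarith))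
          (wfun_nonneg (by linarith)) (Uf_nonneg a x)
  refine ⟨heven, hanti, hq0, ?_⟩
  intro δ
  rcases le_total 0 δ with h | h
  · have := hanti (Set.self_mem_Ici) (Set.mem_Ici.2 h) h
    rwa [hq0] at this
  · rw [heven δ]
    have := hanti (Set.self_mem_Ici) (Set.mem_Ici.2 (by linarith : (0:ℝ) ≤ -δ)) (by linarith)
    rwa [hq0] at this
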